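/- Let D be a digraph obtained from a tournament by deleting the edges of pairwise disjoint stars. Suppose that in the tournament induced on the centers of the missing stars, every vertex is a king, and that every missing edge has positive in-degree in the dependency digraph Δ of D. Then D has a vertex with the second neighborhood property. -/

import Mathlib

variable {V : Type*}

/-- Out-neighborhood of `v`. -/
def Nplus (A : V → V → Prop) (v : V) : Set V := {u | A v u}

/-- In-neighborhood of `v`. -/
def Nminus (A : V → V → Prop) (v : V) : Set V := {u | A u v}

/-- Second out-neighborhood: vertices at directed distance exactly 2 from `v`. -/
def Npp (A : V → V → Prop) (v : V) : Set V :=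
  {u | u ≠ v ∧ ¬ A v u ∧ ∃ w, A v w ∧ A w u}

/-- The second neighborhood property. -/
def SNP (A : V → V → Prop) (v : V) : Prop := (Nplus A v).ncard ≤ (Npp A v).ncard

/-- A digraph (given by its arc relation) has no digons: no 2-cycles (this also rules out loops when stated for `u = v`). -/
def NoDigons (A : V → V → Prop) : Prop := ∀ u v, ¬ (A u v ∧ A v u)

/-- A tournament: an orientation of a complete graph. -/
def IsTournament (A : V → V → Prop) : Prop :=
  (∀ v, ¬ A v v) ∧ ∀ u v : V, u ≠ v → (A u v ↔ ¬ A v u)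

/-- `u v` is a missing edge: distinct and non-adjacent. -/
def MissingEdge (A : V → V → Prop) (u v : V) : Prop := u ≠ v ∧ ¬ A u v ∧ ¬ A v u

/-- `x₁y₁` loses to `x₂y₂` (with this labelling of endpoints). -/
def LosesAt (A : V → V → Prop) (x₁ y₁ x₂ y₂ : V) : Prop :=
  A x₁ x₂ ∧ ¬ A x₁ y₂ ∧ y₂ ∉ Npp A x₁ ∧ A y₁ y₂ ∧ ¬ A y₁ x₂ ∧ x₂ ∉ Npp A y₁

/-- The losing relation between (unordered) missing edges: the arcs of the dependency digraph. -/
def EdgeLoses (A : V → V → Prop) (e e' : Sym2 V) : Prop :=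
  ∃ x₁ y₁ x₂ y₂, e = s(x₁, y₁) ∧ e' = s(x₂, y₂) ∧
    MissingEdge A x₁ y₁ ∧ MissingEdge A x₂ y₂ ∧ LosesAt A x₁ y₁ x₂ y₂
/- ===================== auxiliary machinery ===================== -/

section ListCounting

variable {V : Type*}

open Classical in
/-- indicator of a proposition -/
noncomputable def indP (q : V → Prop) (u : V) : ℕ := if q u then 1 else 0

lemma indP_le_one (q : V → Prop) (u : V) : indP q u ≤ 1 := by
  unfold indP; split <;> omega

lemma indP_pos {q : V → Prop} {u : V} (h : q u) : indP q u = 1 := by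
  unfold indP; rw [if_pos h]

lemma indP_neg {q : V → Prop} {u : V} (h : ¬ q u) : indP q u = 0 := by
  unfold indP; rw [if_neg h]

lemma indP_mono {p q : V → Prop} {u : V} (h : p u → q u) : indP p u ≤ indP q u := by
  unfold indP
  by_cases hp : p u
  · rw [if_pos hp, if_pos (h hp)]
  · rw [if_neg hp]; omega

/-- count of elements satisfying `q` -/
noncomputable def cntP (q : V → Prop) (l : List V) : ℕ := (l.map (indP q)).sum

@[simp] lemma cntP_nil (q : V → Prop) : cntP q ([] : List V) = 0 := rfl

@[simp] lemma cntP_cons (q : V → Prop) (x : V) (xs : List V) :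
    cntP q (x :: xs) = indP q x + cntP q xs := by
  simp [cntP]

@[simp] lemma cntP_append (q : V → Prop) (l₁ l₂ : List V) :
    cntP q (l₁ ++ l₂) = cntP q l₁ + cntP q l₂ := by
  simp [cntP]

@[simp] lemma cntP_singleton (q : V → Prop) (x : V) : cntP q [x] = indP q x := by
  simp [cntP]

lemma cntP_perm (q : V → Prop) {l₁ l₂ : List V} (h : l₁.Perm l₂) :
    cntP q l₁ = cntP q l₂ := (h.map (indP q)).sum_eq

lemma cntP_mono {p q : V → Prop} {l : List V} (h : ∀ u ∈ l, p u → q u) :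
    cntP p l ≤ cntP q l := by
  induction l with
  | nil => simp
  | cons a l ih =>
      simp only [cntP_cons]
      exact Nat.add_le_add (indP_mono (h a (List.mem_cons_self)))
        (ih (fun u hu => h u (List.mem_cons_of_mem a hu)))

lemma cntP_add_le {p₁ p₂ q₁ q₂ : V → Prop} {l : List V}
    (h : ∀ u ∈ l, indP p₁ u + indP p₂ u ≤ indP q₁ u + indP q₂ u) :
    cntP p₁ l + cntP p₂ l ≤ cntP q₁ l + cntP q₂ l := by
  induction l with
  | nil => simp
  | cons a l ih =>
      simp only [cntP_cons]
      have h1 := h a List.mem_cons_self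
      have h2 := ih (fun u hu => h u (List.mem_cons_of_mem a hu))
      omega

/-- the number of forward arcs of `T` along a list -/
noncomputable def scoreT (T : V → V → Prop) : List V → ℕ
  | [] => 0
  | x :: xs => cntP (T x) xs + scoreT T xs

@[simp] lemma scoreT_nil (T : V → V → Prop) : scoreT T [] = 0 := rfl

@[simp] lemma scoreT_cons (T : V → V → Prop) (x : V) (xs : List V) :
    scoreT T (x :: xs) = cntP (T x) xs + scoreT T xs := rfl

/-- forward arcs from `p` to `q` -/
noncomputable def crossT (T : V → V → Prop) (p q : List V) : ℕ :=
  (p.map (fun x => cntP (T x) q)).sum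

@[simp] lemma crossT_nil_left (T : V → V → Prop) (q : List V) : crossT T [] q = 0 := rfl

@[simp] lemma crossT_cons_left (T : V → V → Prop) (x : V) (p q : List V) :
    crossT T (x :: p) q = cntP (T x) q + crossT T p q := by
  simp [crossT]

@[simp] lemma crossT_nil_right (T : V → V → Prop) (p : List V) : crossT T p [] = 0 := by
  induction p with
  | nil => rfl
  | cons a p ih => simp [ih]

lemma crossT_cons_right (T : V → V → Prop) (p : List V) (z : V) (q : List V) :
    crossT T p (z :: q) = cntP (fun x => T x z) p + crossT T p q := by
  induction p with
  | nil => simp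
  | cons a p ih =>
      simp only [crossT_cons_left, cntP_cons, ih]
      have : indP (T a) z = indP (fun x => T x z) a := rfl
      omega

lemma crossT_perm_right (T : V → V → Prop) (p : List V) {q₁ q₂ : List V} (h : q₁.Perm q₂) :
    crossT T p q₁ = crossT T p q₂ := by
  unfold crossT
  congr 1
  exact List.map_congr_left (fun x _ => cntP_perm (T x) h)

lemma scoreT_append (T : V → V → Prop) (p q : List V) :
    scoreT T (p ++ q) = scoreT T p + crossT T p q + scoreT T q := by
  induction p with
  | nil => simp
  | cons a p ih =>
      simp only [List.cons_append, scoreT_cons, cntP_append, ih, crossT_cons_left]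
      omega

lemma exists_max_on_list {α : Type*} (f : α → ℕ) :
    ∀ (l : List α), l ≠ [] → ∃ m ∈ l, ∀ a ∈ l, f a ≤ f m := by
  intro l
  induction l with
  | nil => intro h; exact absurd rfl h
  | cons a l ih =>
      intro _
      rcases eq_or_ne l [] with rfl | hl
      · exact ⟨a, List.mem_cons_self, by simp⟩
      · obtain ⟨m, hm, hmax⟩ := ih hl
        by_cases hfa : f a ≤ f m
        · refine ⟨m, List.mem_cons_of_mem a hm, ?_⟩
          intro b hb
          rcases List.mem_cons.1 hb with rfl | hb
          · exact hfa
          · exact hmax b hb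
        · refine ⟨a, List.mem_cons_self, ?_⟩
          intro b hb
          rcases List.mem_cons.1 hb with rfl | hb
          · exact le_refl _
          · exact le_trans (hmax b hb) (by omega)

lemma exists_first_split {P : V → Prop} :
    ∀ (s : List V), (∃ z ∈ s, P z) →
      ∃ xs z ys, s = xs ++ z :: ys ∧ P z ∧ ∀ u ∈ xs, ¬ P u := by
  intro s
  induction s with
  | nil => rintro ⟨z, hz, _⟩; cases hz
  | cons a s ih =>
      intro h
      by_cases ha : P a
      · exact ⟨[], a, s, rfl, ha, by simp⟩
      · have h' : ∃ z ∈ s, P z := by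
          rcases h with ⟨z, hz, hPz⟩
          rcases List.mem_cons.1 hz with rfl | hz
          · exact absurd hPz ha
          · exact ⟨z, hz, hPz⟩
        obtain ⟨xs, z, ys, h1, h2, h3⟩ := ih h'
        refine ⟨a :: xs, z, ys, by rw [h1]; rfl, h2, ?_⟩
        intro u hu
        rcases List.mem_cons.1 hu with rfl | hu
        · exact ha
        · exact h3 u hu

/-- Median property: within any interval immediately preceding `z`,
the number of dominators of `z` is at least the number of dominees. -/
lemma median_interval {T : V → V → Prop} {m : List V}
    (hmax : ∀ m', m'.Perm m → scoreT T m' ≤ scoreT T m)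
    {p xs : List V} {z : V} {rest : List V}
    (hm : m = p ++ (xs ++ z :: rest)) :
    cntP (fun u => T z u) xs ≤ cntP (fun u => T u z) xs := by
  have hperm : (p ++ (z :: (xs ++ rest))).Perm m := by
    rw [hm]
    exact (List.perm_middle (a := z) (l₁ := xs) (l₂ := rest)).symm.append_left p
  have hle := hmax _ hperm
  rw [hm] at hle
  rw [scoreT_append, scoreT_append] at hle
  rw [crossT_perm_right T p (List.perm_middle (a := z) (l₁ := xs) (l₂ := rest)).symm] at hle
  rw [scoreT_append, crossT_cons_right, scoreT_cons, scoreT_cons, cntP_append,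
    scoreT_append] at hle
  have he1 : cntP (fun u => T z u) xs = cntP (T z) xs := rfl
  have he2 : cntP (fun u => T u z) xs = cntP (fun x => T x z) xs := rfl
  omega

/-- Key swap lemma: if `f` is the last vertex of a median order and `T f x`,
then `x` must beat something `f` does not beat. -/
lemma median_swap {T : V → V → Prop} {m : List V}
    (hT : ∀ u v : V, ¬ (T u v ∧ T v u))
    (hTt : ∀ u v : V, u ≠ v → T u v ∨ T v u)
    (hmax : ∀ m', m'.Perm m → scoreT T m' ≤ scoreT T m)
    (hnd : m.Nodup)
    {p : List V} {x : V} {bs : List V} {f : V}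
    (hm : m = p ++ (x :: (bs ++ [f])))
    (hfx : T f x) (hsub : ∀ u, T x u → T f u) : False := by
  have hxf : ¬ T x f := fun h => hT f x ⟨hfx, h⟩
  -- distinctness
  have hnd' : (x :: (bs ++ [f])).Nodup := by
    rw [hm, List.nodup_append] at hnd
    exact hnd.2.1
  have hxbs : x ∉ bs ++ [f] := (List.nodup_cons.1 hnd').1
  have hndbs : (bs ++ [f]).Nodup := (List.nodup_cons.1 hnd').2
  have hub : ∀ u ∈ bs, u ≠ x ∧ u ≠ f := by
    intro u hu
    constructor
    · intro h; subst h; exact hxbs (List.mem_append_left _ hu)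
    · intro h; subst h
      rw [List.nodup_append] at hndbs
      exact hndbs.2.2 _ hu _ (List.mem_singleton_self _) rfl
  -- the permuted list
  have hp1 : (bs ++ [x]).Perm (x :: bs) := by
    simpa using List.perm_middle (a := x) (l₁ := bs) (l₂ := ([] : List V))
  have hp2 : (bs ++ [f]).Perm (f :: bs) := by
    simpa using List.perm_middle (a := f) (l₁ := bs) (l₂ := ([] : List V))
  have hp : (f :: (bs ++ [x])).Perm (x :: (bs ++ [f])) :=
    ((hp1.cons f).trans (List.Perm.swap x f bs)).trans (hp2.symm.cons x)
  have hperm : (p ++ (f :: (bs ++ [x]))).Perm m := by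
    rw [hm]
    exact List.Perm.append_left p (hp.trans (List.Perm.refl _))
  have hle := hmax _ hperm
  rw [hm] at hle
  rw [scoreT_append, scoreT_append] at hle
  have hcrossEq : crossT T p (f :: (bs ++ [x])) = crossT T p (x :: (bs ++ [f])) :=
    crossT_perm_right T p hp
  rw [hcrossEq] at hle
  -- expand both scores
  rw [scoreT_cons, scoreT_cons, cntP_append, cntP_append, scoreT_append, scoreT_append] at hle
  simp only [cntP_singleton, scoreT_cons, scoreT_nil, cntP_nil, crossT_nil_right] at hle
  -- crossT bs [f] and crossT bs [x]
  have hc1 : crossT T bs [f] = cntP (fun u => T u f) bs := by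
    rw [show ([f] : List V) = f :: [] from rfl, crossT_cons_right]; simp
  have hc2 : crossT T bs [x] = cntP (fun u => T u x) bs := by
    rw [show ([x] : List V) = x :: [] from rfl, crossT_cons_right]; simp
  rw [hc1, hc2] at hle
  have hifx : indP (T f) x = 1 := indP_pos hfx
  have hixf : indP (T x) f = 0 := indP_neg hxf
  rw [hifx, hixf] at hle
  -- pointwise inequality on bs
  have hpw : cntP (T x) bs + cntP (fun u => T u f) bs ≤
      cntP (T f) bs + cntP (fun u => T u x) bs := by
    refine cntP_add_le ?_
    intro u hu
    obtain ⟨hux, huf⟩ := hub u hu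
    by_cases hxu : T x u
    · have hfu : T f u := hsub u hxu
      have h1 : indP (T x) u = 1 := indP_pos hxu
      have h2 : indP (fun u => T u f) u = 0 := indP_neg (fun h => hT f u ⟨hfu, h⟩)
      have h3 : indP (T f) u = 1 := indP_pos hfu
      omega
    · have h1 : indP (T x) u = 0 := indP_neg hxu
      have h4 : T u x := (hTt u x hux).resolve_right hxu
      have h2 : indP (fun u => T u x) u = 1 := indP_pos h4
      have h3 : indP (fun u => T u f) u ≤ 1 := indP_le_one _ u
      omega
  omega

end ListCounting

/- ===================== graph-specific lemmas ===================== -/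

section GraphPart

variable {V : Type*}

/-- the completion tournament: missing edges oriented from the center -/
def Tcomp (A : V → V → Prop) (C : Set V) (u v : V) : Prop :=
  A u v ∨ (MissingEdge A u v ∧ u ∈ C)

lemma missing_symm {A : V → V → Prop} {u v : V} (h : MissingEdge A u v) :
    MissingEdge A v u := ⟨h.1.symm, h.2.2, h.2.1⟩

lemma adj_dichotomy {A : V → V → Prop} {u v : V} (hne : u ≠ v)
    (hnm : ¬ MissingEdge A u v) : A u v ∨ A v u := by
  by_contra h
  push_neg at h
  exact hnm ⟨hne, h.1, h.2⟩

lemma Tcomp_asymm {A : V → V → Prop} {C : Set V} (hA : NoDigons A)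
    (hStar : ∀ u v, MissingEdge A u v → (u ∈ C ∧ v ∉ C) ∨ (v ∈ C ∧ u ∉ C)) :
    ∀ u v : V, ¬ (Tcomp A C u v ∧ Tcomp A C v u) := by
  rintro u v ⟨h1, h2⟩
  rcases h1 with h1 | ⟨hm1, hc1⟩
  · rcases h2 with h2 | ⟨hm2, hc2⟩
    · exact hA u v ⟨h1, h2⟩
    · exact hm2.2.2 h1
  · rcases h2 with h2 | ⟨hm2, hc2⟩
    · exact hm1.2.2 h2
    · rcases hStar u v hm1 with ⟨_, hv⟩ | ⟨_, hu⟩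
      · exact hv hc2
      · exact hu hc1

lemma Tcomp_total {A : V → V → Prop} {C : Set V}
    (hStar : ∀ u v, MissingEdge A u v → (u ∈ C ∧ v ∉ C) ∨ (v ∈ C ∧ u ∉ C)) :
    ∀ u v : V, u ≠ v → Tcomp A C u v ∨ Tcomp A C v u := by
  intro u v hne
  by_cases hm : MissingEdge A u v
  · rcases hStar u v hm with ⟨hu, _⟩ | ⟨hv, _⟩
    · exact Or.inl (Or.inr ⟨hm, hu⟩)
    · exact Or.inr (Or.inr ⟨missing_symm hm, hv⟩)
  · rcases adj_dichotomy hne hm with h | h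
    · exact Or.inl (Or.inl h)
    · exact Or.inr (Or.inl h)

lemma not_self {A : V → V → Prop} (hA : NoDigons A) (v : V) : ¬ A v v :=
  fun h => hA v v ⟨h, h⟩

/-- kings elimination: a center can always reach another center in ≤ 2 steps -/
lemma kings_kill {A : V → V → Prop} {C : Set V}
    (hKing : ∀ x ∈ C, ∀ y ∈ C, y ≠ x → A x y ∨ ∃ w ∈ C, A x w ∧ A w y)
    {c₁ c : V} (hc₁ : c₁ ∈ C) (hc : c ∈ C) (hne : c ≠ c₁)
    (h1 : ¬ A c₁ c) (h2 : c ∉ Npp A c₁) : False := by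
  rcases hKing c₁ hc₁ c hc hne with h | ⟨w, _, hw1, hw2⟩
  · exact h1 h
  · exact h2 ⟨hne, h1, w, hw1, hw2⟩

/-- Aligned consequences of `δ⁻(Δ) > 0` for a missing edge with center `c`. -/
lemma lemF {A : V → V → Prop} {C : Set V} (hA : NoDigons A)
    (hStar : ∀ u v, MissingEdge A u v → (u ∈ C ∧ v ∉ C) ∨ (v ∈ C ∧ u ∉ C))
    (hLeaf : ∀ v ∉ C, ∀ x y, MissingEdge A v x → MissingEdge A v y → x = y)
    (hKing : ∀ x ∈ C, ∀ y ∈ C, y ≠ x → A x y ∨ ∃ w ∈ C, A x w ∧ A w y)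
    (hIndeg : ∀ u v, MissingEdge A u v → ∃ e : Sym2 V, EdgeLoses A e s(u, v))
    {c l : V} (hm : MissingEdge A c l) (hc : c ∈ C) :
    ∃ l₁, l₁ ∉ C ∧ A l₁ l ∧ ¬ A l₁ c ∧ (¬ ∃ w, A l₁ w ∧ A w c) ∧ A c l₁ := by
  obtain ⟨e, x₁, y₁, x₂, y₂, he1, he2, hm1, hm2, hL⟩ := hIndeg c l hm
  obtain ⟨hL1, hL2, hL3, hL4, hL5, hL6⟩ := hL
  -- helper to produce the conclusion from a "good" configuration
  have build : ∀ l₁ c₁ : V, MissingEdge A c₁ l₁ → c₁ ∈ C → l₁ ∉ C →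
      A l₁ l → ¬ A l₁ c → c ∉ Npp A l₁ → A c₁ c →
      (∃ l₁, l₁ ∉ C ∧ A l₁ l ∧ ¬ A l₁ c ∧ (¬ ∃ w, A l₁ w ∧ A w c) ∧ A c l₁) := by
    intro l₁ c₁ hm₁ hc₁ hl₁ hll hlc hnpp hcc
    have hne : c ≠ l₁ := by
      rintro rfl
      exact hm.2.1 hll
    have hno : ¬ ∃ w, A l₁ w ∧ A w c := by
      intro ⟨w, hw1, hw2⟩
      exact hnpp ⟨hne, hlc, w, hw1, hw2⟩
    have hcne : c ≠ c₁ := by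
      rintro rfl
      exact not_self hA c hcc
    have hnotm : ¬ MissingEdge A l₁ c := by
      intro hmc
      exact hcne (hLeaf l₁ hl₁ c c₁ hmc (missing_symm hm₁))
    have hacl : A c l₁ := by
      rcases adj_dichotomy hne.symm (fun h => hnotm h) with h | h
      · exact absurd h hlc
      · exact h
    exact ⟨l₁, hl₁, hll, hlc, hno, hacl⟩
  rcases Sym2.eq_iff.1 he2 with ⟨hx, hy⟩ | ⟨hx, hy⟩
  · subst hx; subst hy
    -- LosesAt x₁ y₁ c l
    rcases hStar x₁ y₁ hm1 with ⟨hx₁C, hy₁C⟩ | ⟨hy₁C, hx₁C⟩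
    · -- x₁ center: good configuration with l₁ = y₁
      exact build y₁ x₁ hm1 hx₁C hy₁C hL4 hL5 hL6 hL1
    · -- y₁ center: mixed, kill by kings
      have hne : c ≠ y₁ := by
        rintro rfl
        exact hm.2.1 hL4
      exact absurd (kings_kill hKing hy₁C hc hne hL5 hL6) id
  · subst hx; subst hy
    -- LosesAt x₁ y₁ l c
    rcases hStar x₁ y₁ hm1 with ⟨hx₁C, hy₁C⟩ | ⟨hy₁C, hx₁C⟩
    · -- x₁ center: mixed, kill
      have hne : c ≠ x₁ := by
        rintro rfl
        exact hm.2.1 hL1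
      exact absurd (kings_kill hKing hx₁C hc hne hL2 hL3) id
    · -- y₁ center: good configuration with l₁ = x₁
      exact build x₁ y₁ (missing_symm hm1) hy₁C hx₁C hL1 hL2 hL3 hL4

end GraphPart

/- ===================== main proof ===================== -/

section MainProof

variable {V : Type*}

lemma no_deficit {A : V → V → Prop} {C : Set V} (hA : NoDigons A)
    (hStar : ∀ u v, MissingEdge A u v → (u ∈ C ∧ v ∉ C) ∨ (v ∈ C ∧ u ∉ C))
    (hLeaf : ∀ v ∉ C, ∀ x y, MissingEdge A v x → MissingEdge A v y → x = y)
    (hKing : ∀ x ∈ C, ∀ y ∈ C, y ≠ x → A x y ∨ ∃ w ∈ C, A x w ∧ A w y)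
    (hIndeg : ∀ u v, MissingEdge A u v → ∃ e : Sym2 V, EdgeLoses A e s(u, v))
    {m : List V}
    (hmax : ∀ m', m'.Perm m → scoreT (Tcomp A C) m' ≤ scoreT (Tcomp A C) m)
    (hnd : m.Nodup) (hall : ∀ v : V, v ∈ m)
    {l' : List V} {f : V} (hshape : m = l' ++ [f])
    {c l : V} (hm : MissingEdge A c l) (hc : c ∈ C) (hfc : A f c)
    (hbad1 : ¬ A f l) (hbad2 : ¬ ∃ w, A f w ∧ A w l) : False := by
  obtain ⟨l₁, hl₁C, hl₁l, hl₁c, hl₁no, hcl₁⟩ := lemF hA hStar hLeaf hKing hIndeg hm hc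
  have h1 : ¬ A f l₁ := fun h => hbad2 ⟨l₁, h, hl₁l⟩
  have hne : f ≠ l₁ := by rintro rfl; exact hbad1 hl₁l
  have h2 : ¬ A l₁ f := fun h => hl₁no ⟨f, h, hfc⟩
  have hM : MissingEdge A f l₁ := ⟨hne, h1, h2⟩
  have hfC : f ∈ C := by
    rcases hStar f l₁ hM with ⟨h, _⟩ | ⟨h1', _⟩
    · exact h
    · exact absurd h1' hl₁C
  obtain ⟨l₀, hl₀C, _, hl₀f, hl₀no, hfl₀⟩ := lemF hA hStar hLeaf hKing hIndeg hM hfC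
  have hsub : ∀ u, Tcomp A C l₀ u → Tcomp A C f u := by
    intro u hu
    rcases hu with h | ⟨_, hcent⟩
    · have huf : ¬ A u f := fun h' => hl₀no ⟨u, h, h'⟩
      have hune : u ≠ f := by
        rintro rfl
        exact hl₀f h
      by_cases hfu : A f u
      · exact Or.inl hfu
      · exact Or.inr ⟨⟨hune.symm, hfu, huf⟩, hfC⟩
    · exact absurd hcent hl₀C
  have hl₀ne : l₀ ≠ f := by
    rintro rfl
    exact not_self hA l₀ hfl₀
  have hmem : l₀ ∈ l' := by
    have hmm := hall l₀
    rw [hshape] at hmm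
    rcases List.mem_append.1 hmm with h | h
    · exact h
    · exact absurd (List.mem_singleton.1 h) hl₀ne
  obtain ⟨s, t, hst⟩ := List.append_of_mem hmem
  have hm2 : m = s ++ (l₀ :: (t ++ [f])) := by
    rw [hshape, hst]; simp
  exact median_swap (Tcomp_asymm hA hStar) (Tcomp_total hStar) hmax hnd hm2
    (Or.inl hfl₀) hsub

lemma main_count {A : V → V → Prop} {C : Set V} (hA : NoDigons A)
    (hStar : ∀ u v, MissingEdge A u v → (u ∈ C ∧ v ∉ C) ∨ (v ∈ C ∧ u ∉ C))
    (hLeaf : ∀ v ∉ C, ∀ x y, MissingEdge A v x → MissingEdge A v y → x = y)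
    (hKing : ∀ x ∈ C, ∀ y ∈ C, y ≠ x → A x y ∨ ∃ w ∈ C, A x w ∧ A w y)
    (hIndeg : ∀ u v, MissingEdge A u v → ∃ e : Sym2 V, EdgeLoses A e s(u, v))
    {m : List V}
    (hmax : ∀ m', m'.Perm m → scoreT (Tcomp A C) m' ≤ scoreT (Tcomp A C) m)
    (hnd : m.Nodup) (hall : ∀ v : V, v ∈ m)
    {l' : List V} {f : V} (hshape : m = l' ++ [f]) :
    ∀ (N : ℕ) (s p : List V), s.length ≤ N → m = p ++ (s ++ [f]) →
      cntP (fun u => A f u) s ≤ cntP (fun u => u ∈ Npp A f) s := by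
  intro N
  induction N with
  | zero =>
      intro s p hlen _
      have hs : s = [] := List.length_eq_zero_iff.1 (Nat.le_zero.1 hlen)
      subst hs; simp
  | succ N ih =>
      intro s p hlen hmp
      have hfnot : ∀ u ∈ s, u ≠ f := by
        intro u hu
        rintro rfl
        have hnd' : (p ++ (s ++ [u])).Nodup := by rw [← hmp]; exact hnd
        rw [List.nodup_append] at hnd'
        have hnd'' := hnd'.2.1
        rw [List.nodup_append] at hnd''
        exact hnd''.2.2 _ hu _ (List.mem_singleton_self _) rfl
      by_cases hbad : ∃ z ∈ s, (¬ A f z ∧ ¬ ∃ w, A f w ∧ A w z)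
      · obtain ⟨xs, z, ys, hsplit, hzbad, hxsgood⟩ := exists_first_split s hbad
        subst hsplit
        have key : ∀ u ∈ xs, A f u → Tcomp A C z u := by
          intro u hu hfu
          by_cases hmz : MissingEdge A u z
          · rcases hStar u z hmz with ⟨huC, _⟩ | ⟨hzC, _⟩
            · exact absurd (no_deficit hA hStar hLeaf hKing hIndeg hmax hnd hall hshape
                hmz huC hfu hzbad.1 hzbad.2) id
            · exact Or.inr ⟨missing_symm hmz, hzC⟩
          · have hne : u ≠ z := by
              rintro rfl
              exact hzbad.1 hfu
            have hnaz : ¬ A u z := fun h => hzbad.2 ⟨u, hfu, h⟩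
            rcases adj_dichotomy hne hmz with h | h
            · exact absurd h hnaz
            · exact Or.inl h
        have h1 : cntP (fun u => A f u) xs ≤ cntP (fun u => Tcomp A C z u) xs :=
          cntP_mono key
        have hm2 : m = p ++ (xs ++ z :: (ys ++ [f])) := by
          rw [hmp]; simp
        have h2 : cntP (fun u => Tcomp A C z u) xs ≤ cntP (fun u => Tcomp A C u z) xs :=
          median_interval hmax hm2
        have h3 : cntP (fun u => Tcomp A C u z) xs ≤ cntP (fun u => u ∈ Npp A f) xs := by
          refine cntP_mono ?_
          intro u hu huz
          have hnzu : ¬ Tcomp A C z u := fun h => Tcomp_asymm hA hStar z u ⟨h, huz⟩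
          have hnfu : ¬ A f u := fun h => hnzu (key u hu h)
          have hgood := hxsgood u hu
          push_neg at hgood
          obtain ⟨w, hw1, hw2⟩ := hgood hnfu
          exact ⟨hfnot u (List.mem_append_left _ hu), hnfu, w, hw1, hw2⟩
        have h4 : cntP (fun u => A f u) ys ≤ cntP (fun u => u ∈ Npp A f) ys := by
          refine ih ys (p ++ xs ++ [z]) ?_ ?_
          · have := hlen
            rw [List.length_append, List.length_cons] at this
            omega
          · rw [hmp]; simp
        have h5 : indP (fun u => A f u) z = 0 := indP_neg hzbad.1
        have e1 : cntP (fun u => A f u) (xs ++ z :: ys) =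
            cntP (fun u => A f u) xs + indP (fun u => A f u) z +
              cntP (fun u => A f u) ys := by
          rw [cntP_append, cntP_cons]; omega
        have e2 : cntP (fun u => u ∈ Npp A f) (xs ++ z :: ys) =
            cntP (fun u => u ∈ Npp A f) xs + indP (fun u => u ∈ Npp A f) z +
              cntP (fun u => u ∈ Npp A f) ys := by
          rw [cntP_append, cntP_cons]; omega
        omega
      · push_neg at hbad
        have h1 : cntP (fun u => A f u) s ≤ cntP (fun u => Tcomp A C f u) s :=
          cntP_mono (fun u _ h => Or.inl h)
        have h2 : cntP (fun u => Tcomp A C f u) s ≤ cntP (fun u => Tcomp A C u f) s :=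
          median_interval hmax (by rw [hmp])
        have h3 : cntP (fun u => Tcomp A C u f) s ≤ cntP (fun u => u ∈ Npp A f) s := by
          refine cntP_mono ?_
          intro u hu huf
          have hnfu' : ¬ Tcomp A C f u := fun h => Tcomp_asymm hA hStar f u ⟨h, huf⟩
          have hnfu : ¬ A f u := fun h => hnfu' (Or.inl h)
          obtain ⟨w, hw1, hw2⟩ := hbad u hu hnfu
          exact ⟨hfnot u hu, hnfu, w, hw1, hw2⟩
        omega

lemma ncard_eq_cnt [Fintype V] (q : V → Prop) (m : List V)
    (hm : m.Perm (Finset.univ : Finset V).toList) : {u | q u}.ncard = cntP q m := by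
  classical
  rw [cntP_perm q hm]
  have h1 : cntP q (Finset.univ : Finset V).toList = ∑ u ∈ Finset.univ, indP q u :=
    Finset.sum_map_toList _ _
  rw [h1]
  have h2 : ∑ u ∈ Finset.univ, indP q u =
      (Finset.univ.filter (fun u => q u)).card := by
    rw [Finset.card_filter]
    refine Finset.sum_congr rfl ?_
    intro u _
    by_cases hq : q u
    · rw [indP_pos hq, if_pos hq]
    · rw [indP_neg hq, if_neg hq]
  rw [h2]
  rw [Set.ncard_eq_toFinset_card']
  congr 1
  ext u
  simp

end MainProof

/-- a digraph obtained from a tournament by deleting the edges of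
pairwise disjoint stars (with set of centers `C`), such that every center is a
king of the tournament induced on the centers, and every missing edge has
positive in-degree in the dependency digraph, has a vertex with the SNP. -/
theorem tournament_minus_disjoint_stars_kings_SNP [Fintype V] [Nonempty V]
    (A : V → V → Prop) (hA : NoDigons A)
    (C : Set V)
    -- the missing graph is a disjoint union of stars with centers `C`:
    (hStar : ∀ u v, MissingEdge A u v → (u ∈ C ∧ v ∉ C) ∨ (v ∈ C ∧ u ∉ C))
    (hLeaf : ∀ v ∉ C, ∀ x y, MissingEdge A v x → MissingEdge A v y → x = y)
    (hCenter : ∀ x ∈ C, ∃ v, MissingEdge A x v)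
    -- every center is a king of the tournament induced on the centers:
    (hKing : ∀ x ∈ C, ∀ y ∈ C, y ≠ x → A x y ∨ ∃ w ∈ C, A x w ∧ A w y)
    -- δ⁻(Δ) > 0 : every missing edge is lost to by some missing edge:
    (hIndeg : ∀ u v, MissingEdge A u v → ∃ e : Sym2 V, EdgeLoses A e s(u, v)) :
    ∃ v : V, SNP A v := by

  classical
  set L := (Finset.univ : Finset V).toList with hL
  have hLne : L ≠ [] := by
    simp only [hL, ne_eq, Finset.toList_eq_nil]
    exact Finset.univ_nonempty.ne_empty
  have hLmem : L ∈ L.permutations := List.mem_permutations.2 (List.Perm.refl L)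
  have hpne : L.permutations ≠ [] := List.ne_nil_of_mem hLmem
  obtain ⟨m, hmmem, hmmax⟩ := exists_max_on_list (scoreT (Tcomp A C)) L.permutations hpne
  have hmL : m.Perm L := List.mem_permutations.1 hmmem
  have hmax : ∀ m', m'.Perm m → scoreT (Tcomp A C) m' ≤ scoreT (Tcomp A C) m :=
    fun m' h => hmmax m' (List.mem_permutations.2 (h.trans hmL))
  have hnd : m.Nodup := hmL.symm.nodup (Finset.nodup_toList _)
  have hall : ∀ v : V, v ∈ m := fun v => hmL.mem_iff.2 (by simp [hL, Finset.mem_toList])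
  have hmne : m ≠ [] := by
    intro h
    have := hall (Classical.arbitrary V)
    rw [h] at this
    cases this
  obtain ⟨l', f, hshape⟩ : ∃ l' f, m = l' ++ [f] := by
    rcases List.eq_nil_or_concat m with h | ⟨l'', b, h⟩
    · exact absurd h hmne
    · exact ⟨l'', b, by rw [h, List.concat_eq_append]⟩
  refine ⟨f, ?_⟩
  have hcnt : cntP (fun u => A f u) l' ≤ cntP (fun u => u ∈ Npp A f) l' := by
    refine main_count hA hStar hLeaf hKing hIndeg hmax hnd hall hshape l'.length l' [] (le_refl _) ?_
    rw [hshape]; simp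
  have hext1 : cntP (fun u => A f u) m = cntP (fun u => A f u) l' := by
    rw [hshape, cntP_append, cntP_singleton, indP_neg (not_self hA f)]
    omega
  have hext2 : cntP (fun u => u ∈ Npp A f) m = cntP (fun u => u ∈ Npp A f) l' +
      indP (fun u => u ∈ Npp A f) f := by
    rw [hshape, cntP_append, cntP_singleton]
  have hc1 : (Nplus A f).ncard = cntP (fun u => A f u) m := by
    have : Nplus A f = {u | A f u} := rfl
    rw [this]
    exact ncard_eq_cnt _ m hmL
  have hc2 : (Npp A f).ncard = cntP (fun u => u ∈ Npp A f) m := by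
    have : Npp A f = {u | u ∈ Npp A f} := rfl
    rw [this]
    exact ncard_eq_cnt _ m hmL
  unfold SNP
  rw [hc1, hc2, hext1, hext2]
  omega
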